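/- On an even-sized grid, the configurations of minimal energy E among all configurations with exactly k ones are exactly the archipelagos with k ones; moreover, every such minimal-energy configuration is a q-archipelago where q is the minority state (q = 1 if k ≤ N_L/2, q = 0 if k ≥ N_L/2). -/
import Mathlib


open scoped Classical

/-- 4-neighbour adjacency on the torus. -/
def adjT {n₁ n₂ : ℕ} (p q : ZMod n₁ × ZMod n₂) : Prop :=
  q = p + (1, 0) ∨ q = p + (0, 1) ∨ q = p + (-1, 0) ∨ q = p + (0, -1)

/-- `x` is a `q`-archipelago: no two adjacent cells are both in state `q`. -/
def qArch {n₁ n₂ : ℕ} (q : Bool) (x : ZMod n₁ × ZMod n₂ → Bool) : Prop :=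
  ∀ p p' : ZMod n₁ × ZMod n₂, adjT p p' → ¬(x p = q ∧ x p' = q)

/-- Energy: number of (ordered) adjacent pairs of cells in equal states. -/
noncomputable def En {n₁ n₂ : ℕ} [NeZero n₁] [NeZero n₂]
    (x : ZMod n₁ × ZMod n₂ → Bool) : ℕ :=
  ∑ u ∈ Finset.univ.filter
      (fun u : (ZMod n₁ × ZMod n₂) × (ZMod n₁ × ZMod n₂) => adjT u.1 u.2),
    if x u.1 = x u.2 then 1 else 0

/-- Number of cells in state 1. -/
noncomputable def ones {n₁ n₂ : ℕ} [NeZero n₁] [NeZero n₂]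
    (x : ZMod n₁ × ZMod n₂ → Bool) : ℕ :=
  (Finset.univ.filter (fun c => x c = true)).card

open Finset

section Aux

variable {n₁ n₂ : ℕ} [NeZero n₁] [NeZero n₂]

lemma adjT_symm {p q : ZMod n₁ × ZMod n₂} (h : adjT p q) : adjT q p := by
  rcases h with h | h | h | h <;> subst h <;> unfold adjT
  · exact Or.inr (Or.inr (Or.inl (by apply Prod.ext <;> simp)))
  · exact Or.inr (Or.inr (Or.inr (by apply Prod.ext <;> simp)))
  · exact Or.inl (by apply Prod.ext <;> simp)
  · exact Or.inr (Or.inl (by apply Prod.ext <;> simp))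

lemma adjT_shift {p q : ZMod n₁ × ZMod n₂} : adjT p q ↔ adjT 0 (q - p) := by
  simp only [adjT, zero_add, sub_eq_iff_eq_add']

/-- degree of a vertex (constant over the torus) -/
noncomputable def deg (n₁ n₂ : ℕ) [NeZero n₁] [NeZero n₂] : ℕ :=
  (Finset.univ.filter (fun v : ZMod n₁ × ZMod n₂ => adjT 0 v)).card

lemma card_nbr (p : ZMod n₁ × ZMod n₂) :
    (Finset.univ.filter (fun v => adjT p v)).card = deg n₁ n₂ := by
  unfold deg
  refine Finset.card_bij' (fun v _ => v - p) (fun v _ => v + p) ?_ ?_ ?_ ?_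
  · intro a ha
    simp only [Finset.mem_filter, Finset.mem_univ, true_and] at ha ⊢
    exact adjT_shift.1 ha
  · intro a ha
    simp only [Finset.mem_filter, Finset.mem_univ, true_and] at ha ⊢
    rw [adjT_shift]
    simpa using ha
  · intro a _; simp
  · intro a _; simp

/-- number of ordered adjacent pairs with first cell in state q, second not -/
noncomputable def BB (n₁ n₂ : ℕ) [NeZero n₁] [NeZero n₂] (q : Bool)
    (x : ZMod n₁ × ZMod n₂ → Bool) : ℕ :=
  ∑ u : (ZMod n₁ × ZMod n₂) × (ZMod n₁ × ZMod n₂),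
    if adjT u.1 u.2 ∧ x u.1 = q ∧ x u.2 ≠ q then 1 else 0

/-- total number of ordered adjacent pairs -/
noncomputable def TT (n₁ n₂ : ℕ) [NeZero n₁] [NeZero n₂] : ℕ :=
  ∑ u : (ZMod n₁ × ZMod n₂) × (ZMod n₁ × ZMod n₂), if adjT u.1 u.2 then 1 else 0

lemma en_add_BB (q : Bool) (x : ZMod n₁ × ZMod n₂ → Bool) :
    En x + 2 * BB n₁ n₂ q x = TT n₁ n₂ := by
  have hB' : BB n₁ n₂ q x = ∑ u : (ZMod n₁ × ZMod n₂) × (ZMod n₁ × ZMod n₂),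
      if adjT u.1 u.2 ∧ x u.1 ≠ q ∧ x u.2 = q then 1 else 0 := by
    rw [BB]
    apply Fintype.sum_equiv (Equiv.prodComm _ _)
    intro u
    simp only [Equiv.prodComm_apply, Prod.fst_swap, Prod.snd_swap]
    refine if_congr ?_ rfl rfl
    constructor
    · rintro ⟨h1, h2, h3⟩; exact ⟨adjT_symm h1, h3, h2⟩
    · rintro ⟨h1, h2, h3⟩; exact ⟨adjT_symm h1, h3, h2⟩
  have hE : En x = ∑ u : (ZMod n₁ × ZMod n₂) × (ZMod n₁ × ZMod n₂),
      if adjT u.1 u.2 then (if x u.1 = x u.2 then 1 else 0) else 0 := by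
    rw [En, Finset.sum_filter]
  rw [two_mul, hE]
  nth_rewrite 2 [hB']
  rw [BB, ← Finset.sum_add_distrib, ← Finset.sum_add_distrib, TT]
  refine Finset.sum_congr rfl fun u _ => ?_
  by_cases hadj : adjT u.1 u.2
  · cases hx1 : x u.1 <;> cases hx2 : x u.2 <;> cases q <;> simp [hadj, hx1, hx2]
  · simp [hadj]

lemma sum_ite_const (c : ℕ) (P : ZMod n₁ × ZMod n₂ → Prop) [DecidablePred P] :
    (∑ p : ZMod n₁ × ZMod n₂, if P p then c else 0)
      = c * (Finset.univ.filter P).card := by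
  rw [← Finset.sum_filter, Finset.sum_const, smul_eq_mul, mul_comm]

lemma BB_eq (q : Bool) (x : ZMod n₁ × ZMod n₂ → Bool) :
    BB n₁ n₂ q x = ∑ p : ZMod n₁ × ZMod n₂,
      if x p = q then (Finset.univ.filter (fun v => adjT p v ∧ x v ≠ q)).card else 0 := by
  rw [BB, Fintype.sum_prod_type]
  refine Finset.sum_congr rfl fun p _ => ?_
  by_cases hp : x p = q
  · simp only [hp, if_true]
    rw [Finset.card_filter]
    refine Finset.sum_congr rfl fun v _ => ?_
    simp [hp]
  · simp [hp]

lemma BB_le (q : Bool) (x : ZMod n₁ × ZMod n₂ → Bool) :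
    BB n₁ n₂ q x ≤ deg n₁ n₂ * (Finset.univ.filter (fun c => x c = q)).card := by
  rw [BB_eq, ← sum_ite_const]
  refine Finset.sum_le_sum fun p _ => ?_
  by_cases hp : x p = q
  · simp only [hp, if_true]
    rw [← card_nbr p]
    refine Finset.card_le_card fun v hv => ?_
    simp only [Finset.mem_filter] at hv ⊢
    exact ⟨hv.1, hv.2.1⟩
  · simp [hp]

lemma arch_BB {q : Bool} {x : ZMod n₁ × ZMod n₂ → Bool} (h : qArch q x) :
    BB n₁ n₂ q x = deg n₁ n₂ * (Finset.univ.filter (fun c => x c = q)).card := by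
  rw [BB_eq, ← sum_ite_const]
  refine Finset.sum_congr rfl fun p _ => ?_
  by_cases hp : x p = q
  · simp only [hp, if_true]
    rw [← card_nbr p]
    congr 1
    apply Finset.filter_congr
    intro v _
    constructor
    · exact fun hv => hv.1
    · intro hv
      refine ⟨hv, fun hvq => h p v hv ⟨hp, hvq⟩⟩
  · simp [hp]

lemma BB_arch {q : Bool} {x : ZMod n₁ × ZMod n₂ → Bool}
    (h : BB n₁ n₂ q x = deg n₁ n₂ * (Finset.univ.filter (fun c => x c = q)).card) :
    qArch q x := by
  rw [BB_eq, ← sum_ite_const] at h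
  have hle : ∀ p ∈ (Finset.univ : Finset (ZMod n₁ × ZMod n₂)),
      (if x p = q then (Finset.univ.filter (fun v => adjT p v ∧ x v ≠ q)).card else 0)
        ≤ (if x p = q then deg n₁ n₂ else 0) := by
    intro p _
    by_cases hp : x p = q
    · simp only [hp, if_true]
      rw [← card_nbr p]
      refine Finset.card_le_card fun v hv => ?_
      simp only [Finset.mem_filter] at hv ⊢
      exact ⟨hv.1, hv.2.1⟩
    · simp [hp]
  have hpt := (Finset.sum_eq_sum_iff_of_le hle).1 h
  intro p p' hadj hc
  obtain ⟨hp, hp'⟩ := hc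
  have := hpt p (Finset.mem_univ p)
  simp only [hp, if_true] at this
  have hset : (Finset.univ.filter (fun v => adjT p v ∧ x v ≠ q))
      = Finset.univ.filter (fun v => adjT p v) := by
    apply Finset.eq_of_subset_of_card_le
    · intro v hv
      simp only [Finset.mem_filter] at hv ⊢
      exact ⟨hv.1, hv.2.1⟩
    · rw [this, card_nbr]
  have hmem : p' ∈ Finset.univ.filter (fun v => adjT p v) := by
    simp [hadj]
  rw [← hset] at hmem
  simp only [Finset.mem_filter] at hmem
  exact hmem.2.2 hp'

lemma cnt_false (x : ZMod n₁ × ZMod n₂ → Bool) :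
    (Finset.univ.filter (fun c => x c = false)).card + ones x = n₁ * n₂ := by
  have h := Finset.card_filter_add_card_filter_not
    (s := (Finset.univ : Finset (ZMod n₁ × ZMod n₂))) (p := fun c => x c = true)
  simp only [Bool.not_eq_true] at h
  rw [Finset.card_univ, Fintype.card_prod, ZMod.card, ZMod.card] at h
  rw [ones]
  omega

/-- parity of a cell -/
noncomputable def par (h1 : 2 ∣ n₁) (h2 : 2 ∣ n₂) (p : ZMod n₁ × ZMod n₂) : ZMod 2 :=
  ZMod.castHom h1 (ZMod 2) p.1 + ZMod.castHom h2 (ZMod 2) p.2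

lemma par_adj (h1 : 2 ∣ n₁) (h2 : 2 ∣ n₂) {p q : ZMod n₁ × ZMod n₂} (h : adjT p q) :
    par h1 h2 q = par h1 h2 p + 1 := by
  have e1 : (-1 : ZMod 2) = 1 := by decide
  rcases h with h | h | h | h <;> subst h <;>
    simp only [par, Prod.fst_add, Prod.snd_add, map_add, map_one, map_zero, map_neg, e1] <;>
    ring

lemma half_card (h1 : 2 ∣ n₁) (h2 : 2 ∣ n₂) :
    2 * (Finset.univ.filter (fun p : ZMod n₁ × ZMod n₂ => par h1 h2 p = 0)).card
      = n₁ * n₂ := by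
  have hadj1 : ∀ p : ZMod n₁ × ZMod n₂, adjT p (p + (1, 0)) := fun p => Or.inl rfl
  have hbij : (Finset.univ.filter (fun p : ZMod n₁ × ZMod n₂ => par h1 h2 p = 0)).card
      = (Finset.univ.filter (fun p : ZMod n₁ × ZMod n₂ => par h1 h2 p = 1)).card := by
    refine Finset.card_bij' (fun p _ => p + (1, 0)) (fun p _ => p - (1, 0)) ?_ ?_ ?_ ?_
    · intro a ha
      simp only [Finset.mem_filter, Finset.mem_univ, true_and] at ha ⊢
      rw [par_adj h1 h2 (hadj1 a), ha, zero_add]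
    · intro a ha
      simp only [Finset.mem_filter, Finset.mem_univ, true_and] at ha ⊢
      have : a = (a - (1, 0)) + (1, 0) := by abel
      rw [this] at ha
      rw [par_adj h1 h2 (hadj1 (a - (1, 0)))] at ha
      exact add_eq_right.mp ha
    · intro a _; simp
    · intro a _; simp
  have htot := Finset.card_filter_add_card_filter_not
    (s := (Finset.univ : Finset (ZMod n₁ × ZMod n₂)))
    (p := fun p => par h1 h2 p = 0)
  have hcongr : (Finset.univ.filter (fun p : ZMod n₁ × ZMod n₂ => ¬ par h1 h2 p = 0))
      = Finset.univ.filter (fun p : ZMod n₁ × ZMod n₂ => par h1 h2 p = 1) := by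
    apply Finset.filter_congr
    intro p _
    have : ∀ a : ZMod 2, ¬ a = 0 ↔ a = 1 := by decide
    exact this _
  rw [hcongr, ← hbij, Finset.card_univ, Fintype.card_prod, ZMod.card, ZMod.card] at htot
  omega

lemma exists_arch (h1 : 2 ∣ n₁) (h2 : 2 ∣ n₂) (q : Bool) (m : ℕ)
    (hm : 2 * m ≤ n₁ * n₂) :
    ∃ x : ZMod n₁ × ZMod n₂ → Bool,
      (Finset.univ.filter (fun c => x c = q)).card = m ∧ qArch q x := by
  have hC := half_card h1 h2
  obtain ⟨s, hs_sub, hs_card⟩ := Finset.exists_subset_card_eq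
    (s := Finset.univ.filter (fun p : ZMod n₁ × ZMod n₂ => par h1 h2 p = 0))
    (n := m) (by omega)
  refine ⟨fun p => if p ∈ s then q else !q, ?_, ?_⟩
  · have hfs : Finset.univ.filter
        (fun c : ZMod n₁ × ZMod n₂ => (if c ∈ s then q else !q) = q) = s := by
      ext c
      simp only [Finset.mem_filter, Finset.mem_univ, true_and]
      by_cases hc : c ∈ s <;> simp [hc]
    rw [hfs, hs_card]
  · intro p p' hadj hc
    obtain ⟨hp, hp'⟩ := hc
    have hps : p ∈ s := by
      by_contra hns
      simp only [hns, if_false] at hp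
      exact Bool.not_ne_self q hp
    have hps' : p' ∈ s := by
      by_contra hns
      simp only [hns, if_false] at hp'
      exact Bool.not_ne_self q hp'
    have h0 : par h1 h2 p = 0 := by
      have := hs_sub hps
      simpa using this
    have h0' : par h1 h2 p' = 0 := by
      have := hs_sub hps'
      simpa using this
    have := par_adj h1 h2 hadj
    rw [h0, h0', zero_add] at this
    exact one_ne_zero this.symm

end Aux

theorem minimal_energy_iff_archipelago
    (n₁ n₂ : ℕ) [NeZero n₁] [NeZero n₂] (h₁ : Even n₁) (h₂ : Even n₂)
    (k : ℕ) (hk : k ≤ n₁ * n₂) :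
    (∃ x : ZMod n₁ × ZMod n₂ → Bool, ones x = k ∧ (qArch true x ∨ qArch false x)) ∧
    (∀ x : ZMod n₁ × ZMod n₂ → Bool, ones x = k →
      (((∀ y : ZMod n₁ × ZMod n₂ → Bool, ones y = k → En x ≤ En y) ↔
          (qArch true x ∨ qArch false x)) ∧
        ((∀ y : ZMod n₁ × ZMod n₂ → Bool, ones y = k → En x ≤ En y) →
          (2 * k ≤ n₁ * n₂ → qArch true x) ∧ (n₁ * n₂ ≤ 2 * k → qArch false x)))) := by
  have d1 : 2 ∣ n₁ := h₁.two_dvd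
  have d2 : 2 ∣ n₂ := h₂.two_dvd
  have cnt_true : ∀ x : ZMod n₁ × ZMod n₂ → Bool,
      (Finset.univ.filter (fun c => x c = true)).card = ones x := fun _ => rfl
  -- archipelagos with given counts exist
  have ex_true : 2 * k ≤ n₁ * n₂ →
      ∃ x : ZMod n₁ × ZMod n₂ → Bool, ones x = k ∧ qArch true x := by
    intro h2k
    obtain ⟨x, hxc, hxa⟩ := exists_arch d1 d2 true k h2k
    exact ⟨x, hxc, hxa⟩
  have ex_false : n₁ * n₂ ≤ 2 * k →
      ∃ x : ZMod n₁ × ZMod n₂ → Bool, ones x = k ∧ qArch false x := by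
    intro h2k
    obtain ⟨x, hxc, hxa⟩ := exists_arch d1 d2 false (n₁ * n₂ - k) (by omega)
    have := cnt_false x
    exact ⟨x, by omega, hxa⟩
  -- archipelago implies minimal
  have min_of_arch : ∀ x : ZMod n₁ × ZMod n₂ → Bool, ones x = k →
      (qArch true x ∨ qArch false x) →
      ∀ y : ZMod n₁ × ZMod n₂ → Bool, ones y = k → En x ≤ En y := by
    intro x hx harch y hy
    rcases harch with h | h
    · have hx1 := arch_BB h
      rw [cnt_true, hx] at hx1
      have hy1 := BB_le true y
      rw [cnt_true, hy] at hy1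
      have e1 := en_add_BB true x
      have e2 := en_add_BB true y
      omega
    · have hx1 := arch_BB h
      have hy1 := BB_le false y
      have cx := cnt_false x
      have cy := cnt_false y
      have hcc : (Finset.univ.filter (fun c => x c = false)).card
          = (Finset.univ.filter (fun c => y c = false)).card := by omega
      rw [hcc] at hx1
      have e1 := en_add_BB false x
      have e2 := en_add_BB false y
      omega
  -- minimal implies appropriate archipelago
  have min_arch_true : ∀ x : ZMod n₁ × ZMod n₂ → Bool, ones x = k →
      (∀ y : ZMod n₁ × ZMod n₂ → Bool, ones y = k → En x ≤ En y) →
      2 * k ≤ n₁ * n₂ → qArch true x := by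
    intro x hx hmin h2k
    obtain ⟨z, hz, hza⟩ := ex_true h2k
    have hmz := hmin z hz
    have ez1 := arch_BB hza
    rw [cnt_true, hz] at ez1
    have ex1 := BB_le true x
    rw [cnt_true, hx] at ex1
    have e1 := en_add_BB true x
    have e2 := en_add_BB true z
    have : BB n₁ n₂ true x = deg n₁ n₂ * k := by omega
    apply BB_arch
    rw [cnt_true, hx, this]
  have min_arch_false : ∀ x : ZMod n₁ × ZMod n₂ → Bool, ones x = k →
      (∀ y : ZMod n₁ × ZMod n₂ → Bool, ones y = k → En x ≤ En y) →
      n₁ * n₂ ≤ 2 * k → qArch false x := by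
    intro x hx hmin h2k
    obtain ⟨z, hz, hza⟩ := ex_false h2k
    have hmz := hmin z hz
    have ez1 := arch_BB hza
    have cz := cnt_false z
    have cx := cnt_false x
    have hzz : (Finset.univ.filter (fun c => z c = false)).card = n₁ * n₂ - k := by omega
    have hxx : (Finset.univ.filter (fun c => x c = false)).card = n₁ * n₂ - k := by omega
    rw [hzz] at ez1
    have ex1 := BB_le false x
    rw [hxx] at ex1
    have e1 := en_add_BB false x
    have e2 := en_add_BB false z
    have : BB n₁ n₂ false x = deg n₁ n₂ * (n₁ * n₂ - k) := by omega
    apply BB_arch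
    rw [hxx, this]
  constructor
  · rcases le_or_gt (2 * k) (n₁ * n₂) with h | h
    · obtain ⟨x, hx, hxa⟩ := ex_true h
      exact ⟨x, hx, Or.inl hxa⟩
    · obtain ⟨x, hx, hxa⟩ := ex_false (le_of_lt h)
      exact ⟨x, hx, Or.inr hxa⟩
  · intro x hx
    constructor
    · constructor
      · intro hmin
        rcases le_or_gt (2 * k) (n₁ * n₂) with h | h
        · exact Or.inl (min_arch_true x hx hmin h)
        · exact Or.inr (min_arch_false x hx hmin (le_of_lt h))
      · exact min_of_arch x hx
    · intro hmin
      exact ⟨min_arch_true x hx hmin, min_arch_false x hx hmin⟩
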